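/- Let R be a Noetherian super-commutative super-ring of Krull super-dimension r|s, and let y ∈ R₁ be an odd element contained in some system of odd parameters of the maximal length s. Then the odd Krull dimension of R/Ry is at least s − 1. -/

import Mathlib

/-- The product `z₁ ⋯ z_l` of a family of (odd) elements, in order. -/
noncomputable def oddProd {R : Type*} [Ring R] {l : ℕ} (z : Fin l → R) : R :=
  (List.ofFn z).prod

/-- The two-sided ideal `R·x·R` generated by `x`. -/
def twoSidedSpan {R : Type*} [Ring R] (x : R) : Ideal R :=
  Ideal.span {w : R | ∃ a b : R, w = a * x * b}

/-- `z₁,…,z_t` (odd elements of `R`) is a system of odd parameters of the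
quotient super-ring `R/Ry`:  `Kdim(B₀/Ann(z₁⋯z_t mod Ry)) = Kdim((R/Ry)₀)`,
where `(R/Ry)₀ = R₀/(Ry ∩ R₀)` has Krull dimension
`Kdim (R₀ ⧸ torsionOf (1 mod Ry))`. -/
def IsSOPModulo {R₀ R : Type*} [CommRing R₀] [Ring R] [Algebra R₀ R]
    (𝒜 : ZMod 2 → Submodule R₀ R) (y : R) {t : ℕ} (z : Fin t → R) : Prop :=
  (∀ i, z i ∈ 𝒜 1) ∧
    ringKrullDim (R₀ ⧸ Ideal.torsionOf R₀ (R ⧸ twoSidedSpan y)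
        (Submodule.Quotient.mk (oddProd z))) =
      ringKrullDim (R₀ ⧸ Ideal.torsionOf R₀ (R ⧸ twoSidedSpan y)
        (Submodule.Quotient.mk 1))

section Auxiliary

variable {R₀ R : Type*} [CommRing R₀] [Ring R] [Algebra R₀ R]
variable (𝒜 : ZMod 2 → Submodule R₀ R)

/-- Odd elements anticommute. -/
lemma odd_anticomm (hsq : ∀ a ∈ 𝒜 1, a * a = 0)
    {a b : R} (ha : a ∈ 𝒜 1) (hb : b ∈ 𝒜 1) : a * b = -(b * a) := by
  have h := hsq (a + b) (add_mem ha hb)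
  rw [mul_add, add_mul, add_mul, hsq a ha, hsq b hb, zero_add, add_zero] at h
  exact eq_neg_of_add_eq_zero_right h

/-- Moving an odd element across a list of odd elements, from the left. -/
lemma odd_mul_list (hsq : ∀ a ∈ 𝒜 1, a * a = 0)
    {u : R} (hu : u ∈ 𝒜 1) :
    ∀ (L : List R), (∀ x ∈ L, x ∈ 𝒜 1) →
      u * L.prod = ((-1 : ℤ) ^ L.length) • (L.prod * u)
  | [], _ => by simp
  | a :: L, hL => by
    have ha : a ∈ 𝒜 1 := hL a List.mem_cons_self
    have hL' : ∀ x ∈ L, x ∈ 𝒜 1 := fun x hx => hL x (List.mem_cons_of_mem a hx)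
    have ih := odd_mul_list hsq hu L hL'
    have hau : u * a = -(a * u) := odd_anticomm 𝒜 hsq hu ha
    calc u * (a :: L).prod = (u * a) * L.prod := by rw [List.prod_cons, mul_assoc]
      _ = -(a * (u * L.prod)) := by rw [hau, neg_mul, mul_assoc]
      _ = -(a * (((-1 : ℤ) ^ L.length) • (L.prod * u))) := by rw [ih]
      _ = ((-1 : ℤ) ^ (a :: L).length) • ((a :: L).prod * u) := by
          rw [mul_smul_comm, ← neg_smul, List.length_cons, List.prod_cons,
            pow_succ, mul_assoc]
          congr 1
          simp

/-- Moving an odd element across a list of odd elements, from the right. -/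
lemma list_mul_odd (hsq : ∀ a ∈ 𝒜 1, a * a = 0)
    {u : R} (hu : u ∈ 𝒜 1) (L : List R) (hL : ∀ x ∈ L, x ∈ 𝒜 1) :
    L.prod * u = ((-1 : ℤ) ^ L.length) • (u * L.prod) := by
  rw [odd_mul_list 𝒜 hsq hu L hL, smul_smul, ← pow_add,
    Even.neg_one_pow ⟨L.length, rfl⟩, one_smul]

/-- For an odd `y`, `y * b` can be rewritten as `d * y`. -/
lemma odd_mul_right_swap [GradedAlgebra 𝒜] (h0 : 𝒜 0 = 1)
    (hsq : ∀ a ∈ 𝒜 1, a * a = 0)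
    {y : R} (hy : y ∈ 𝒜 1) (b : R) : ∃ d : R, y * b = d * y := by
  induction b using DirectSum.Decomposition.inductionOn 𝒜 with
  | zero => exact ⟨0, by simp⟩
  | homogeneous m =>
    rename_i i
    obtain ⟨m, hm⟩ := m
    rcases (by decide : ∀ j : ZMod 2, j = 0 ∨ j = 1) i with rfl | rfl
    · rw [h0] at hm
      obtain ⟨c, rfl⟩ := Submodule.mem_one.mp hm
      exact ⟨algebraMap R₀ R c, (Algebra.commutes c y).symm⟩
    · exact ⟨-m, by have := odd_anticomm 𝒜 hsq hy hm; simpa [neg_mul] using this⟩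
  | add m m' hm hm' =>
    obtain ⟨d, hd⟩ := hm
    obtain ⟨d', hd'⟩ := hm'
    exact ⟨d + d', by rw [mul_add, hd, hd', add_mul]⟩

/-- Membership in the two-sided span of an odd element. -/
lemma mem_twoSidedSpan_iff [GradedAlgebra 𝒜] (h0 : 𝒜 0 = 1)
    (hsq : ∀ a ∈ 𝒜 1, a * a = 0)
    {y : R} (hy : y ∈ 𝒜 1) (x : R) :
    x ∈ twoSidedSpan y ↔ ∃ c : R, x = c * y := by
  constructor
  · intro hx
    induction hx using Submodule.span_induction with
    | mem w hw =>
      obtain ⟨a, b, rfl⟩ := hw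
      obtain ⟨d, hd⟩ := odd_mul_right_swap 𝒜 h0 hsq hy b
      exact ⟨a * d, by rw [mul_assoc, hd, mul_assoc]⟩
    | zero => exact ⟨0, by simp⟩
    | add u v _ _ hu hv =>
      obtain ⟨c, rfl⟩ := hu; obtain ⟨c', rfl⟩ := hv
      exact ⟨c + c', (add_mul c c' y).symm⟩
    | smul r u _ hu =>
      obtain ⟨c, rfl⟩ := hu
      exact ⟨r * c, by rw [smul_eq_mul, mul_assoc]⟩
  · rintro ⟨c, rfl⟩
    exact Ideal.subset_span ⟨c, 1, by rw [mul_one]⟩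

/-- A product of odd generators with a repetition vanishes. -/
lemma prod_map_eq_zero_of_not_nodup (hsq : ∀ a ∈ 𝒜 1, a * a = 0)
    {n : ℕ} (g : Fin n → R) (hg : ∀ j, g j ∈ 𝒜 1) :
    ∀ (J : List (Fin n)), ¬ J.Nodup → (J.map g).prod = 0 := by
  intro J
  induction J with
  | nil => intro h; exact absurd List.nodup_nil h
  | cons j J ih =>
    intro h
    rw [List.nodup_cons] at h
    push_neg at h
    by_cases hmem : j ∈ J
    · obtain ⟨P, Q, rfl⟩ := List.append_of_mem hmem
      have hPodd : ∀ x ∈ P.map g, x ∈ 𝒜 1 := by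
        rintro x hx
        obtain ⟨p, _, rfl⟩ := List.mem_map.mp hx
        exact hg p
      rw [List.map_cons, List.prod_cons, List.map_append, List.prod_append,
        List.map_cons, List.prod_cons]
      calc g j * ((P.map g).prod * (g j * (Q.map g).prod))
          = (g j * (P.map g).prod) * (g j * (Q.map g).prod) := by rw [mul_assoc]
        _ = (((-1 : ℤ) ^ (P.map g).length) • ((P.map g).prod * g j)) *
              (g j * (Q.map g).prod) := by
            rw [odd_mul_list 𝒜 hsq (hg j) (P.map g) hPodd]
        _ = ((-1 : ℤ) ^ (P.map g).length) •
              ((P.map g).prod * ((g j * g j) * (Q.map g).prod)) := by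
            rw [smul_mul_assoc, mul_assoc, mul_assoc]
        _ = 0 := by rw [hsq (g j) (hg j), zero_mul, mul_zero, smul_zero]
    · have : ¬ J.Nodup := h hmem
      rw [List.map_cons, List.prod_cons, ih this, mul_zero]

/-- Products of odd elements lie in the span of products of generators. -/
lemma prod_mem_span_prods {n : ℕ} (g : Fin n → R)
    (hgspan : ∀ a ∈ 𝒜 1, a ∈ Submodule.span R₀ (Set.range g)) :
    ∀ (L : List R), (∀ x ∈ L, x ∈ 𝒜 1) →
      L.prod ∈ Submodule.span R₀
        {x : R | ∃ J : List (Fin n), J.length = L.length ∧ (J.map g).prod = x} := by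
  intro L
  induction L with
  | nil =>
    intro _
    exact Submodule.subset_span ⟨[], rfl, by simp⟩
  | cons a L ih =>
    intro hL
    have ha := hgspan a (hL a List.mem_cons_self)
    have hL' := ih (fun x hx => hL x (List.mem_cons_of_mem a hx))
    rw [List.prod_cons]
    have hmul : a * L.prod ∈
        Submodule.span R₀ (Set.range g) *
          Submodule.span R₀
            {x : R | ∃ J : List (Fin n), J.length = L.length ∧ (J.map g).prod = x} :=
      Submodule.mul_mem_mul ha hL'
    rw [Submodule.span_mul_span] at hmul
    refine Submodule.span_le.mpr ?_ hmul
    rintro w hw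
    rw [Set.mem_mul] at hw
    obtain ⟨u, hu, v, hv, rfl⟩ := hw
    obtain ⟨jj, rfl⟩ := hu
    obtain ⟨J, hJlen, rfl⟩ := hv
    exact Submodule.subset_span ⟨jj :: J, by simp [hJlen], by simp⟩

/-- A product of more odd elements than the number of generators of `𝒜 1`
vanishes. -/
lemma long_odd_prod_eq_zero (hsq : ∀ a ∈ 𝒜 1, a * a = 0)
    {n : ℕ} (gg : Fin n → (𝒜 1)) (hgg : Submodule.span R₀ (Set.range gg) = ⊤)
    (L : List R) (hL : ∀ x ∈ L, x ∈ 𝒜 1) (hlen : n < L.length) :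
    L.prod = 0 := by
  set g : Fin n → R := fun j => (gg j : R) with hgdef
  have hg : ∀ j, g j ∈ 𝒜 1 := fun j => (gg j).2
  have hgspan : ∀ a ∈ 𝒜 1, a ∈ Submodule.span R₀ (Set.range g) := by
    intro a ha
    have h1 : (⟨a, ha⟩ : (𝒜 1)) ∈ Submodule.span R₀ (Set.range gg) := hgg ▸ trivial
    have h2 : a ∈ Submodule.map (𝒜 1).subtype (Submodule.span R₀ (Set.range gg)) :=
      ⟨⟨a, ha⟩, h1, rfl⟩
    rwa [Submodule.map_span, ← Set.range_comp] at h2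
  have hmem := prod_mem_span_prods 𝒜 g hgspan L hL
  have hzero : {x : R | ∃ J : List (Fin n), J.length = L.length ∧ (J.map g).prod = x}
      ⊆ {(0 : R)} := by
    rintro x ⟨J, hJ, rfl⟩
    have hnd : ¬ J.Nodup := by
      intro hnd
      have := hnd.length_le_card
      simp only [Fintype.card_fin] at this
      omega
    simp [prod_map_eq_zero_of_not_nodup 𝒜 hsq g hg J hnd]
  have := Submodule.span_mono (R := R₀) hzero hmem
  simpa using this

/-- Quotienting by a larger ideal gives smaller Krull dimension. -/
lemma kdim_quotient_antitone {I J : Ideal R₀} (h : I ≤ J) :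
    ringKrullDim (R₀ ⧸ J) ≤ ringKrullDim (R₀ ⧸ I) := by
  refine ringKrullDim_le_of_surjective (Ideal.Quotient.factor h) ?_
  intro x
  obtain ⟨r, rfl⟩ := Ideal.Quotient.mk_surjective x
  exact ⟨Ideal.Quotient.mk I r, Ideal.Quotient.factor_mk h r⟩

lemma ofFn_comp_succAbove {α : Type*} {m : ℕ} (z : Fin (m + 1) → α) (i : Fin (m + 1)) :
    List.ofFn (z ∘ i.succAbove) =
      (List.ofFn z).take i ++ (List.ofFn z).drop (i + 1) := by
  have hlen1 : (List.ofFn (z ∘ i.succAbove)).length = m := by simp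
  have hlen2 : ((List.ofFn z).take i ++ (List.ofFn z).drop (i + 1)).length = m := by
    have := le_of_lt i.2
    simp only [List.length_append, List.length_take, List.length_drop, List.length_ofFn]
    omega
  apply List.ext_getElem (by rw [hlen1, hlen2])
  intro k h1 h2
  rw [hlen1] at h1
  rw [List.getElem_ofFn]
  simp only [Function.comp_apply]
  by_cases hk : k < (i : ℕ)
  · rw [List.getElem_append_left (by simp; omega)]
    rw [List.getElem_take, List.getElem_ofFn]
    congr 1
    have hlt : ((⟨k, by omega⟩ : Fin m)).castSucc < i := by
      simp [Fin.lt_iff_val_lt_val]; omega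
    rw [Fin.succAbove_of_castSucc_lt _ _ hlt]
    rfl
  · rw [List.getElem_append_right (by simp; omega)]
    rw [List.getElem_drop, List.getElem_ofFn]
    congr 1
    have hle : i ≤ ((⟨k, by omega⟩ : Fin m)).castSucc := by
      simp [Fin.le_iff_val_le_val]; omega
    rw [Fin.succAbove_of_le_castSucc _ _ hle]
    ext
    simp only [Fin.val_succ, List.length_take, List.length_ofFn]
    omega

end Auxiliary

/-- Let `R` be a Noetherian super-commutative super-ring of
Krull super-dimension `r|s` and `y` an odd element contained in some system of
odd parameters of maximal length `s`.  Then the odd Krull dimension of `R/Ry`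
is at least `s - 1`. -/
theorem odd_dim_quotient_ge
    {R₀ R : Type*} [CommRing R₀] [Ring R] [Algebra R₀ R]
    (𝒜 : ZMod 2 → Submodule R₀ R) [GradedAlgebra 𝒜]
    (h0 : 𝒜 0 = 1) (hinj : Function.Injective (algebraMap R₀ R))
    (hsq : ∀ a ∈ 𝒜 1, a * a = 0)
    [IsNoetherianRing R₀] [Module.Finite R₀ (𝒜 1)]
    (r : WithBot ℕ∞) (s : ℕ)
    (hr : ringKrullDim R₀ = r) (hrtop : r ≠ ⊤)
    (hs : sSup {t : ℕ | ∃ z : Fin t → R, (∀ i, z i ∈ 𝒜 1) ∧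
      ringKrullDim (R₀ ⧸ Ideal.torsionOf R₀ R (oddProd z)) = ringKrullDim R₀} = s)
    (y : R) (hy : y ∈ 𝒜 1)
    (hcontained : ∃ z : Fin s → R, (∀ i, z i ∈ 𝒜 1) ∧
      ringKrullDim (R₀ ⧸ Ideal.torsionOf R₀ R (oddProd z)) = ringKrullDim R₀ ∧
      ∃ i, z i = y) :
    s - 1 ≤ sSup {t : ℕ | ∃ z : Fin t → R, IsSOPModulo 𝒜 y z} := by
  classical
  by_cases hRtriv : Subsingleton R₀
  · -- Degenerate case: `R₀` is the zero ring; then `s = 0`.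
    have huniv : {t : ℕ | ∃ z : Fin t → R, (∀ i, z i ∈ 𝒜 1) ∧
        ringKrullDim (R₀ ⧸ Ideal.torsionOf R₀ R (oddProd z)) = ringKrullDim R₀}
        = Set.univ := by
      ext t
      simp only [Set.mem_setOf_eq, Set.mem_univ, iff_true]
      refine ⟨fun _ => 0, fun i => (𝒜 1).zero_mem, ?_⟩
      haveI : Subsingleton (R₀ ⧸ Ideal.torsionOf R₀ R (oddProd (0 : Fin t → R))) :=
        Ideal.Quotient.mk_surjective.subsingleton
      rw [ringKrullDim_eq_bot_of_subsingleton, ringKrullDim_eq_bot_of_subsingleton]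
    have hs0 : s = 0 := by
      rw [← hs, huniv, Set.Infinite.Nat.sSup_eq_zero Set.infinite_univ]
    rw [hs0]
    exact Nat.zero_le _
  · haveI : Nontrivial R₀ := not_subsingleton_iff_nontrivial.mp hRtriv
    obtain ⟨z, hzodd, hzdim, i, hzi⟩ := hcontained
    obtain ⟨m, rfl⟩ : ∃ m, s = m + 1 := Nat.exists_eq_succ_of_ne_zero (Nat.pos_iff_ne_zero.mp i.pos)
    -- the family with `y` removed
    set w : Fin m → R := z ∘ i.succAbove with hwdef
    have hwodd : ∀ j, w j ∈ 𝒜 1 := fun j => hzodd _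
    have hyy : y * y = 0 := hsq y hy
    have hRymem := mem_twoSidedSpan_iff 𝒜 h0 hsq hy
    -- split the list of `z` at position `i`
    set A : List R := (List.ofFn z).take i with hAdef
    set B : List R := (List.ofFn z).drop (i + 1) with hBdef
    have hBodd : ∀ x ∈ B, x ∈ 𝒜 1 := by
      intro x hx
      have := List.mem_of_mem_drop hx
      obtain ⟨j, rfl⟩ := List.mem_ofFn.mp this
      exact hzodd j
    have hofz : List.ofFn z = A ++ y :: B := by
      have hi : (i : ℕ) < (List.ofFn z).length := by simp [i.2]
      have h1 : (List.ofFn z).drop i = (List.ofFn z)[(i : ℕ)] :: B :=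
        List.drop_eq_getElem_cons hi
      have h2 : (List.ofFn z)[(i : ℕ)] = y := by
        rw [List.getElem_ofFn]
        simpa using hzi
      rw [← List.take_append_drop (i : ℕ) (List.ofFn z), h1, h2]
    have hofw : List.ofFn w = A ++ B := ofFn_comp_succAbove z i
    have hzprod : oddProd z = A.prod * (y * B.prod) := by
      rw [oddProd, hofz, List.prod_append, List.prod_cons]
    have hsplit : oddProd w * y = ((-1 : ℤ) ^ B.length) • oddProd z := by
      rw [oddProd, hofw, List.prod_append, hzprod, mul_assoc,
        list_mul_odd 𝒜 hsq hy B hBodd, mul_smul_comm]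
    -- the three relevant annihilator ideals
    set I₁ : Ideal R₀ := Ideal.torsionOf R₀ (R ⧸ twoSidedSpan y)
      (Submodule.Quotient.mk 1) with hI₁def
    set Iw : Ideal R₀ := Ideal.torsionOf R₀ (R ⧸ twoSidedSpan y)
      (Submodule.Quotient.mk (oddProd w)) with hIwdef
    set IZ : Ideal R₀ := Ideal.torsionOf R₀ R (oddProd z) with hIZdef
    have hI₁Iw : I₁ ≤ Iw := by
      intro a ha
      rw [hI₁def, Ideal.mem_torsionOf_iff, ← Submodule.Quotient.mk_smul,
        Submodule.Quotient.mk_eq_zero] at ha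
      rw [Ideal.mem_torsionOf_iff, ← Submodule.Quotient.mk_smul,
        Submodule.Quotient.mk_eq_zero]
      rw [Algebra.smul_def, mul_one] at ha
      obtain ⟨c, hc⟩ := (hRymem _).mp ha
      rw [hRymem]
      refine ⟨oddProd w * c, ?_⟩
      have hswap : a • oddProd w = oddProd w * algebraMap R₀ R a := by
        rw [Algebra.smul_def, Algebra.commutes]
      rw [hswap, hc, ← mul_assoc]
    have hIwIZ : Iw ≤ IZ := by
      intro a ha
      rw [hIwdef, Ideal.mem_torsionOf_iff, ← Submodule.Quotient.mk_smul,
        Submodule.Quotient.mk_eq_zero] at ha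
      obtain ⟨c, hc⟩ := (hRymem _).mp ha
      rw [hIZdef, Ideal.mem_torsionOf_iff]
      have h1 : a • (oddProd w * y) = 0 := by
        rw [← smul_mul_assoc, hc, mul_assoc, hyy, mul_zero]
      rw [hsplit] at h1
      rcases neg_one_pow_eq_or ℤ B.length with hpow | hpow <;> rw [hpow] at h1
      · simpa using h1
      · rw [neg_smul, one_smul, smul_neg, neg_eq_zero] at h1
        exact h1
    -- the dimension chain
    have d1 : ringKrullDim (R₀ ⧸ Iw) ≤ ringKrullDim (R₀ ⧸ I₁) :=
      kdim_quotient_antitone hI₁Iw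
    have d2 : ringKrullDim (R₀ ⧸ IZ) ≤ ringKrullDim (R₀ ⧸ Iw) :=
      kdim_quotient_antitone hIwIZ
    have d3 : ringKrullDim (R₀ ⧸ I₁) ≤ ringKrullDim R₀ := ringKrullDim_quotient_le I₁
    have H1 : ringKrullDim (R₀ ⧸ I₁) = ringKrullDim R₀ :=
      le_antisymm d3 (by rw [← hzdim]; exact d2.trans d1)
    have HA : ringKrullDim (R₀ ⧸ Iw) = ringKrullDim (R₀ ⧸ I₁) :=
      le_antisymm d1 (by rw [H1, ← hzdim]; exact d2)
    have hmem : m ∈ {t : ℕ | ∃ z : Fin t → R, IsSOPModulo 𝒜 y z} :=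
      ⟨w, hwodd, HA⟩
    -- the set of lengths is bounded
    obtain ⟨n, gg, hgg⟩ := Module.Finite.exists_fin (R := R₀) (M := (𝒜 1))
    have hbdd : BddAbove {t : ℕ | ∃ z : Fin t → R, IsSOPModulo 𝒜 y z} := by
      refine ⟨n, ?_⟩
      rintro t ⟨u, huodd, hudim⟩
      by_contra hnt
      push_neg at hnt
      have hzero : oddProd u = 0 := by
        refine long_odd_prod_eq_zero 𝒜 hsq gg hgg (List.ofFn u) ?_ (by simpa using hnt)
        intro x hx
        obtain ⟨j, rfl⟩ := List.mem_ofFn.mp hx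
        exact huodd j
      rw [hzero, Submodule.Quotient.mk_zero, Ideal.torsionOf_zero, ← hI₁def] at hudim
      haveI : Subsingleton (R₀ ⧸ (⊤ : Ideal R₀)) :=
        Ideal.Quotient.subsingleton_iff.mpr rfl
      have hb : ringKrullDim (R₀ ⧸ (⊤ : Ideal R₀)) = ⊥ :=
        ringKrullDim_eq_bot_of_subsingleton
      have hcon : ringKrullDim R₀ = ⊥ := by rw [← H1, ← hudim, hb]
      have hge : (0 : WithBot ℕ∞) ≤ ringKrullDim R₀ := ringKrullDim_nonneg_of_nontrivial
      rw [hcon] at hge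
      exact absurd hge (by simp)
    have := le_csSup hbdd hmem
    simpa using this
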